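/- One-step dissipation bound for the multilayer update: let x_k, y_k ∈ ℝ^d and r_k ∈ ℝ \ {0} for k = 1,…,L, and set X = (1/L)∑_k (x_k + r_k(y_k − x_k)), Y = (1/L)∑_k (y_k + r_k(x_k − y_k)). Then ∑_k (‖x_k‖² + ‖y_k‖²) − L‖X‖² − L‖Y‖² ≥ 2 ∑_k r_k² (r_k⁻¹ − 1) ‖y_k − x_k‖². -/

import Mathlib

theorem multilayer_dissipation_bound (d L : ℕ) (hL : 1 ≤ L)
    (x y : Fin L → EuclideanSpace ℝ (Fin d)) (r : Fin L → ℝ)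
    (hr : ∀ k, r k ≠ 0)
    (X Y : EuclideanSpace ℝ (Fin d))
    (hX : X = ((L : ℝ)⁻¹) • ∑ k, (x k + r k • (y k - x k)))
    (hY : Y = ((L : ℝ)⁻¹) • ∑ k, (y k + r k • (x k - y k))) :
    2 * ∑ k, (r k) ^ 2 * ((r k)⁻¹ - 1) * ‖y k - x k‖ ^ 2
      ≤ (∑ k, (‖x k‖ ^ 2 + ‖y k‖ ^ 2)) - (L : ℝ) * ‖X‖ ^ 2 - (L : ℝ) * ‖Y‖ ^ 2 := by
  have hLpos : (0:ℝ) < (L:ℝ) := by exact_mod_cast Nat.lt_of_lt_of_le Nat.zero_lt_one hL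
  set v : Fin L → EuclideanSpace ℝ (Fin d) := fun k => x k + r k • (y k - x k) with hv
  set w : Fin L → EuclideanSpace ℝ (Fin d) := fun k => y k + r k • (x k - y k) with hw
  -- Jensen
  have jensen : ∀ (Z : EuclideanSpace ℝ (Fin d)) (u : Fin L → EuclideanSpace ℝ (Fin d)),
      Z = ((L : ℝ)⁻¹) • ∑ k, u k → (L:ℝ) * ‖Z‖^2 ≤ ∑ k, ‖u k‖^2 := by
    intro Z u hZ
    have h1 : ‖Z‖ ≤ (L:ℝ)⁻¹ * ∑ k, ‖u k‖ := by
      rw [hZ, norm_smul]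
      simp only [norm_inv, Real.norm_natCast]
      exact mul_le_mul_of_nonneg_left (norm_sum_le _ _) (by positivity)
    have h2 : (∑ k, ‖u k‖)^2 ≤ (L:ℝ) * ∑ k, ‖u k‖^2 := by
      have := sq_sum_le_card_mul_sum_sq (s := Finset.univ) (f := fun k => ‖u k‖)
      simpa using this
    have h3 : ‖Z‖^2 ≤ ((L:ℝ)⁻¹ * ∑ k, ‖u k‖)^2 :=
      pow_le_pow_left₀ (norm_nonneg _) h1 2
    calc (L:ℝ) * ‖Z‖^2 ≤ (L:ℝ) * ((L:ℝ)⁻¹ * ∑ k, ‖u k‖)^2 :=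
          mul_le_mul_of_nonneg_left h3 hLpos.le
      _ = (L:ℝ)⁻¹ * (∑ k, ‖u k‖)^2 := by field_simp
      _ ≤ (L:ℝ)⁻¹ * ((L:ℝ) * ∑ k, ‖u k‖^2) := mul_le_mul_of_nonneg_left h2 (by positivity)
      _ = ∑ k, ‖u k‖^2 := by field_simp
  have hXle := jensen X v hX
  have hYle := jensen Y w hY
  -- pointwise identity
  have key : ∀ k, ‖v k‖^2 + ‖w k‖^2 = ‖x k‖^2 + ‖y k‖^2
      - 2 * ((r k)^2 * ((r k)⁻¹ - 1) * ‖y k - x k‖^2) := by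
    intro k
    have hrk := hr k
    have e1 : ‖v k‖^2 = ‖x k‖^2 + 2 * (r k * inner ℝ (x k) (y k - x k)) + (r k)^2 * ‖y k - x k‖^2 := by
      simp only [hv]
      rw [@norm_add_sq_real, norm_smul, real_inner_smul_right]
      rw [mul_pow, Real.norm_eq_abs, sq_abs]
    have e2 : ‖w k‖^2 = ‖y k‖^2 + 2 * (r k * inner ℝ (y k) (x k - y k)) + (r k)^2 * ‖x k - y k‖^2 := by
      simp only [hw]
      rw [@norm_add_sq_real, norm_smul, real_inner_smul_right]
      rw [mul_pow, Real.norm_eq_abs, sq_abs]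
    have e3 : inner ℝ (x k) (y k - x k) + inner ℝ (y k) (x k - y k) = -(‖y k - x k‖^2 : ℝ) := by
      rw [@norm_sub_sq_real]
      rw [inner_sub_right, inner_sub_right, real_inner_comm (y k) (x k),
        real_inner_self_eq_norm_sq, real_inner_self_eq_norm_sq]
      ring
    have e4 : ‖x k - y k‖ = ‖y k - x k‖ := norm_sub_rev _ _
    have e5 : (r k)^2 * ((r k)⁻¹ - 1) = r k - (r k)^2 := by field_simp
    rw [e1, e2, e4, e5]
    have : r k * inner ℝ (x k) (y k - x k) + r k * inner ℝ (y k) (x k - y k)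
        = - (r k * ‖y k - x k‖^2) := by
      rw [← mul_add, e3]; ring
    nlinarith [this]
  have sumkey : ∑ k, ‖v k‖^2 + ∑ k, ‖w k‖^2
      = (∑ k, (‖x k‖^2 + ‖y k‖^2)) - 2 * ∑ k, (r k)^2 * ((r k)⁻¹ - 1) * ‖y k - x k‖^2 := by
    rw [← Finset.sum_add_distrib, Finset.mul_sum, ← Finset.sum_sub_distrib]
    exact Finset.sum_congr rfl fun k _ => key k
  linarith
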